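/- Let Q = k_q[x₁,…,xₙ] be a skew polynomial ring. A homogeneous element f ∈ Q (with respect to the standard grading with deg x_i = 1) is normal if and only if all monomials x^I appearing with nonzero coefficient in f have the same normalizing automorphism, i.e. there exist scalars β₁,…,βₙ ∈ k* with f x_j = β_j x_j f for all j. -/

import Mathlib

noncomputable section

namespace SkewNormal

variable {k : Type*} [Field k] {n : ℕ} (q : Fin n → Fin n → kˣ)

/-- the twisting cocycle -/
def qc (I J : Fin n →₀ ℕ) : kˣ :=
  ∏ i : Fin n, ∏ j : Fin n, if j < i then (q i j) ^ (I i * J j) else 1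

lemma qc_add_left (I I' J : Fin n →₀ ℕ) : qc q (I + I') J = qc q I J * qc q I' J := by
  unfold qc
  rw [← Finset.prod_mul_distrib]
  refine Finset.prod_congr rfl fun i _ => ?_
  rw [← Finset.prod_mul_distrib]
  refine Finset.prod_congr rfl fun j _ => ?_
  by_cases h : j < i <;> simp [h, Finsupp.add_apply, add_mul, pow_add]

lemma qc_add_right (I J J' : Fin n →₀ ℕ) : qc q I (J + J') = qc q I J * qc q I J' := by
  unfold qc
  rw [← Finset.prod_mul_distrib]
  refine Finset.prod_congr rfl fun i _ => ?_
  rw [← Finset.prod_mul_distrib]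
  refine Finset.prod_congr rfl fun j _ => ?_
  by_cases h : j < i <;> simp [h, Finsupp.add_apply, mul_add, pow_add]

lemma qc_zero_left (J : Fin n →₀ ℕ) : qc q 0 J = 1 := by
  unfold qc
  refine Finset.prod_eq_one fun i _ => Finset.prod_eq_one fun j _ => ?_
  by_cases h : j < i <;> simp [h]

lemma qc_zero_right (I : Fin n →₀ ℕ) : qc q I 0 = 1 := by
  unfold qc
  refine Finset.prod_eq_one fun i _ => Finset.prod_eq_one fun j _ => ?_
  by_cases h : j < i <;> simp [h]

lemma qc_single_single (i j : Fin n) :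
    qc q (Finsupp.single i 1) (Finsupp.single j 1) = if j < i then q i j else 1 := by
  unfold qc
  rw [Finset.prod_eq_single i ?_ (by simp)]
  · rw [Finset.prod_eq_single j ?_ (by simp)]
    · simp
    · intro b _ hb
      by_cases h : b < i <;> simp [h, Finsupp.single_apply, hb.symm, hb]
  · intro b _ hb
    refine Finset.prod_eq_one fun c _ => ?_
    by_cases h : c < b <;> simp [h, Finsupp.single_apply, hb.symm, hb]

end SkewNormal

namespace SkewNormal

/-- Carrier of the twisted monoid algebra. -/
def TA (k : Type*) [Field k] {n : ℕ} (_q : Fin n → Fin n → kˣ) : Type _ :=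
  (Fin n →₀ ℕ) →₀ k

variable {k : Type*} [Field k] {n : ℕ} {q : Fin n → Fin n → kˣ}

instance : AddCommGroup (TA k q) := inferInstanceAs (AddCommGroup ((Fin n →₀ ℕ) →₀ k))
instance : Module k (TA k q) := inferInstanceAs (Module k ((Fin n →₀ ℕ) →₀ k))

/-- identification with Finsupp -/
def eF : TA k q ≃ₗ[k] ((Fin n →₀ ℕ) →₀ k) :=
  { toFun := id, invFun := id, map_add' := fun _ _ => rfl, map_smul' := fun _ _ => rfl,
    left_inv := fun _ => rfl, right_inv := fun _ => rfl }

/-- basis elements -/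
def sg (q : Fin n → Fin n → kˣ) (I : Fin n →₀ ℕ) (a : k) : TA k q :=
  eF.symm (Finsupp.single I a)

@[simp] lemma eF_sg (I : Fin n →₀ ℕ) (a : k) : eF (sg q I a) = Finsupp.single I a := rfl

def innerL (I : Fin n →₀ ℕ) : TA k q →ₗ[k] TA k q :=
  (Finsupp.lsum k fun J => LinearMap.toSpanSingleton k (TA k q)
      (sg q (I + J) (qc q I J))) ∘ₗ eF.toLinearMap

lemma innerL_sg (I J : Fin n →₀ ℕ) (b : k) :
    innerL I (sg q J b) = sg q (I + J) (b * qc q I J) := by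
  have : innerL I (sg q J b) = b • sg q (I + J) ((qc q I J : k)) := by
    simp [innerL, LinearMap.toSpanSingleton_apply]
  rw [this]
  apply eF.injective
  simp [Finsupp.smul_single]

def mulL : TA k q →ₗ[k] TA k q →ₗ[k] TA k q :=
  (Finsupp.lsum k fun I => LinearMap.toSpanSingleton k (TA k q →ₗ[k] TA k q)
      (innerL I)) ∘ₗ eF.toLinearMap

instance : Mul (TA k q) := ⟨fun f g => mulL f g⟩
instance : One (TA k q) := ⟨sg q 0 1⟩

lemma mul_def' (f g : TA k q) : f * g = mulL f g := rfl
lemma one_def : (1 : TA k q) = sg q 0 1 := rfl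

lemma sg_mul_sg (I J : Fin n →₀ ℕ) (a b : k) :
    sg q I a * sg q J b = sg q (I + J) (a * b * qc q I J) := by
  have : mulL (sg q I a) = a • innerL (q := q) I := by
    simp [mulL, LinearMap.toSpanSingleton_apply]
  rw [mul_def', this, LinearMap.smul_apply, innerL_sg]
  apply eF.injective
  rw [map_smul, eF_sg, eF_sg, Finsupp.smul_single', mul_assoc]

lemma ta_add_mul (f g h : TA k q) : (f + g) * h = f * h + g * h := by
  simp [mul_def', map_add]
lemma ta_mul_add (f g h : TA k q) : f * (g + h) = f * g + f * h := by
  simp [mul_def', map_add]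
lemma ta_zero_mul (f : TA k q) : (0 : TA k q) * f = 0 := by simp [mul_def', map_zero]
lemma ta_mul_zero (f : TA k q) : f * (0 : TA k q) = 0 := by simp [mul_def', map_zero]
lemma ta_smul_mul (a : k) (f g : TA k q) : (a • f) * g = a • (f * g) := by
  simp [mul_def', map_smul]
lemma ta_mul_smul (a : k) (f g : TA k q) : f * (a • g) = a • (f * g) := by
  simp [mul_def', map_smul]

lemma ta_induction {p : TA k q → Prop} (h0 : p 0)
    (hadd : ∀ f g, p f → p g → p (f + g))
    (hs : ∀ I a, p (sg q I a)) (f : TA k q) : p f := by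
  have := Finsupp.induction_linear (motive := fun x : (Fin n →₀ ℕ) →₀ k => p (eF.symm x))
    (f := eF f) h0 (fun f g hf hg => by
      show p (eF.symm (f + g)); rw [map_add]; exact hadd _ _ hf hg) (fun a b => hs a b)
  simpa using this

lemma ta_one_mul (f : TA k q) : 1 * f = f := by
  induction f using ta_induction with
  | h0 => exact ta_mul_zero 1
  | hadd f g hf hg => rw [ta_mul_add, hf, hg]
  | hs I a => rw [one_def, sg_mul_sg, qc_zero_left]; simp
lemma ta_mul_one (f : TA k q) : f * 1 = f := by
  induction f using ta_induction with
  | h0 => exact ta_zero_mul 1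
  | hadd f g hf hg => rw [ta_add_mul, hf, hg]
  | hs I a => rw [one_def, sg_mul_sg, qc_zero_right]; simp

lemma ta_mul_assoc (f g h : TA k q) : f * g * h = f * (g * h) := by
  induction f using ta_induction with
  | h0 => simp [ta_zero_mul]
  | hadd f f' hf hf' => simp only [ta_add_mul, hf, hf']
  | hs I a =>
    induction g using ta_induction with
    | h0 => simp [ta_zero_mul, ta_mul_zero]
    | hadd g g' hg hg' => simp only [ta_mul_add, ta_add_mul, hg, hg']
    | hs J b =>
      induction h using ta_induction with
      | h0 => simp [ta_mul_zero]
      | hadd h h' hh hh' => simp only [ta_mul_add, hh, hh']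
      | hs L c =>
        rw [sg_mul_sg, sg_mul_sg, sg_mul_sg, sg_mul_sg]
        congr 1
        · rw [add_assoc]
        · rw [qc_add_left, qc_add_right]
          push_cast
          ring

instance : Ring (TA k q) :=
  { (inferInstance : AddCommGroup (TA k q)) with
    mul := (· * ·), one := 1,
    mul_assoc := ta_mul_assoc,
    one_mul := ta_one_mul, mul_one := ta_mul_one,
    left_distrib := ta_mul_add, right_distrib := ta_add_mul,
    zero_mul := ta_zero_mul, mul_zero := ta_mul_zero }

instance : Algebra k (TA k q) := Algebra.ofModule ta_smul_mul ta_mul_smul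

lemma ta_algebraMap (a : k) : algebraMap k (TA k q) a = sg q 0 a := by
  rw [Algebra.algebraMap_eq_smul_one, one_def]
  apply eF.injective
  simp [Finsupp.smul_single]

end SkewNormal

namespace SkewNormal

variable {k : Type*} [Field k] {n : ℕ} {q : Fin n → Fin n → kˣ}

lemma mul_eq_sum (f g : TA k q) : f * g = (eF f).sum fun I a => a • innerL I g := by
  rw [mul_def']
  show ((Finsupp.lsum k fun I => LinearMap.toSpanSingleton k (TA k q →ₗ[k] TA k q) (innerL I))
      (eF f)) g = _
  rw [Finsupp.lsum_apply, Finsupp.sum, Finsupp.sum, LinearMap.sum_apply]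
  refine Finset.sum_congr rfl fun I _ => ?_
  rw [LinearMap.toSpanSingleton_apply, LinearMap.smul_apply]

lemma innerL_eq_sum (I : Fin n →₀ ℕ) (g : TA k q) :
    innerL I g = (eF g).sum fun J b => b • sg q (I + J) (qc q I J) := by
  show ((Finsupp.lsum k fun J => LinearMap.toSpanSingleton k (TA k q)
      (sg q (I + J) (qc q I J))) (eF g)) = _
  rw [Finsupp.lsum_apply]
  refine Finsupp.sum_congr fun J _ => ?_
  rw [LinearMap.toSpanSingleton_apply]

lemma eF_mul (f g : TA k q) : eF (f * g) =
    (eF f).sum fun I a => (eF g).sum fun J b =>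
      Finsupp.single (I + J) (a * b * qc q I J) := by
  rw [mul_eq_sum, map_finsuppSum]
  refine Finsupp.sum_congr fun I _ => ?_
  rw [map_smul, innerL_eq_sum, map_finsuppSum, Finsupp.smul_sum]
  refine Finsupp.sum_congr fun J _ => ?_
  rw [map_smul, eF_sg, Finsupp.smul_single, Finsupp.smul_single]
  congr 1
  rw [smul_eq_mul, smul_eq_mul, mul_assoc]

lemma eF_mul_apply (f g : TA k q) (K : Fin n →₀ ℕ) : eF (f * g) K =
    ∑ I ∈ (eF f).support, ∑ J ∈ (eF g).support,
      if I + J = K then eF f I * eF g J * qc q I J else 0 := by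
  rw [eF_mul, Finsupp.sum_apply, Finsupp.sum]
  refine Finset.sum_congr rfl fun I _ => ?_
  rw [Finsupp.sum_apply, Finsupp.sum]
  refine Finset.sum_congr rfl fun J _ => ?_
  rw [Finsupp.single_apply]

lemma exists_of_mem_support_mul {f g : TA k q} {K : Fin n →₀ ℕ}
    (hK : K ∈ (eF (f * g)).support) :
    ∃ I ∈ (eF f).support, ∃ J ∈ (eF g).support, K = I + J := by
  by_contra h
  push_neg at h
  rw [Finsupp.mem_support_iff] at hK
  apply hK
  rw [eF_mul_apply]
  refine Finset.sum_eq_zero fun I hI => Finset.sum_eq_zero fun J hJ => ?_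
  rw [if_neg]
  exact fun e => (h I hI J hJ) e.symm

lemma eF_mul_apply_unique {f g : TA k q} {I₀ J₀ : Fin n →₀ ℕ}
    (hI₀ : I₀ ∈ (eF f).support) (hJ₀ : J₀ ∈ (eF g).support)
    (huniq : ∀ I ∈ (eF f).support, ∀ J ∈ (eF g).support,
      I + J = I₀ + J₀ → I = I₀ ∧ J = J₀) :
    eF (f * g) (I₀ + J₀) = eF f I₀ * eF g J₀ * qc q I₀ J₀ := by
  rw [eF_mul_apply, Finset.sum_eq_single I₀]
  · rw [Finset.sum_eq_single J₀]
    · simp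
    · intro J hJ hne
      rw [if_neg]
      exact fun e => hne (huniq _ hI₀ _ hJ e).2
    · intro h; exact absurd hJ₀ h
  · intro I hI hne
    refine Finset.sum_eq_zero fun J hJ => ?_
    rw [if_neg]
    exact fun e => hne (huniq _ hI _ hJ e).1
  · intro h; exact absurd hI₀ h

lemma support_sg {J₀ : Fin n →₀ ℕ} {b : k} (hb : b ≠ 0) :
    (eF (sg q J₀ b)).support = {J₀} := by
  rw [eF_sg]; exact Finsupp.support_single_ne_zero _ hb

lemma support_mul_sg (f : TA k q) (J₀ : Fin n →₀ ℕ) {b : k} (hb : b ≠ 0) :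
    (eF (f * sg q J₀ b)).support = (eF f).support.image (· + J₀) := by
  ext K
  constructor
  · intro hK
    obtain ⟨I, hI, J, hJ, rfl⟩ := exists_of_mem_support_mul hK
    rw [support_sg hb, Finset.mem_singleton] at hJ
    subst hJ
    exact Finset.mem_image_of_mem _ hI
  · intro hK
    obtain ⟨I, hI, rfl⟩ := Finset.mem_image.mp hK
    rw [Finsupp.mem_support_iff]
    have huniq : ∀ I' ∈ (eF f).support, ∀ J' ∈ (eF (sg q J₀ b)).support,
        I' + J' = I + J₀ → I' = I ∧ J' = J₀ := by
      intro I' _ J' hJ' he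
      rw [support_sg hb, Finset.mem_singleton] at hJ'
      subst hJ'
      exact ⟨add_right_cancel he, rfl⟩
    rw [eF_mul_apply_unique hI (by rw [support_sg hb]; exact Finset.mem_singleton_self _) huniq]
    rw [Finsupp.mem_support_iff] at hI
    rw [eF_sg, Finsupp.single_eq_same]
    exact mul_ne_zero (mul_ne_zero hI hb) (Units.ne_zero _)

lemma eF_mul_sg_apply (f : TA k q) (J₀ : Fin n →₀ ℕ) (b : k) (hb : b ≠ 0) (I : Fin n →₀ ℕ)
    (hI : I ∈ (eF f).support) :
    eF (f * sg q J₀ b) (I + J₀) = eF f I * b * qc q I J₀ := by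
  have huniq : ∀ I' ∈ (eF f).support, ∀ J' ∈ (eF (sg q J₀ b)).support,
      I' + J' = I + J₀ → I' = I ∧ J' = J₀ := by
    intro I' _ J' hJ' he
    rw [support_sg hb, Finset.mem_singleton] at hJ'
    subst hJ'
    exact ⟨add_right_cancel he, rfl⟩
  rw [eF_mul_apply_unique hI (by rw [support_sg hb]; exact Finset.mem_singleton_self _) huniq,
    eF_sg, Finsupp.single_eq_same]

end SkewNormal

namespace SkewNormal

variable {k : Type*} [Field k] {n : ℕ} {q : Fin n → Fin n → kˣ}

lemma extreme_aux {g h : TA k q} {j : Fin n}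
    (heq : g * h = h * sg q (Finsupp.single j 1) 1)
    (hsupp_rhs : (eF (h * sg q (Finsupp.single j 1) 1)).support
      = (eF h).support.image (· + Finsupp.single j 1))
    (r : Lex (Fin n →₀ ℕ) → Lex (Fin n →₀ ℕ) → Prop)
    (hrefl : ∀ a, r a a)
    (hanti : ∀ a b, r a b → r b a → a = b)
    (hadd : ∀ a b c d, r a b → r c d → r (a + c) (b + d))
    (hne : ∀ a b c d, r a b → a ≠ b → r c d → a + c ≠ b + d)
    (Tm : Fin n →₀ ℕ) (hTm : Tm ∈ (eF g).support)
    (Sm : Fin n →₀ ℕ) (hSm : Sm ∈ (eF h).support)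
    (hTmax : ∀ I ∈ (eF g).support, r (toLex I) (toLex Tm))
    (hSmax : ∀ J ∈ (eF h).support, r (toLex J) (toLex Sm)) :
    Tm = Finsupp.single j 1 := by
  set εj : Fin n →₀ ℕ := Finsupp.single j 1 with hεj
  have huniq : ∀ I ∈ (eF g).support, ∀ J ∈ (eF h).support,
      I + J = Tm + Sm → I = Tm ∧ J = Sm := by
    intro I hI J hJ he
    have h1 : toLex I + toLex J = toLex Tm + toLex Sm := by
      rw [← toLex_add, ← toLex_add, he]
    have hIeq : toLex I = toLex Tm := by
      by_contra hneI
      exact hne _ _ _ _ (hTmax I hI) hneI (hSmax J hJ) h1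
    rw [hIeq] at h1
    exact ⟨toLex.injective hIeq, toLex.injective (add_left_cancel h1)⟩
  have hc : Tm + Sm ∈ (eF (g * h)).support := by
    rw [Finsupp.mem_support_iff, eF_mul_apply_unique hTm hSm huniq]
    rw [Finsupp.mem_support_iff] at hTm hSm
    exact mul_ne_zero (mul_ne_zero hTm hSm) (Units.ne_zero _)
  rw [heq, hsupp_rhs] at hc
  obtain ⟨Sj, hSj, hSjεj⟩ := Finset.mem_image.mp hc
  have hA : r (toLex (Tm + Sm)) (toLex (Sm + εj)) := by
    rw [← hSjεj, toLex_add, toLex_add]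
    exact hadd _ _ _ _ (hSmax Sj hSj) (hrefl _)
  have hB : r (toLex (Sm + εj)) (toLex (Tm + Sm)) := by
    have hc2 : Sm + εj ∈ (eF (g * h)).support := by
      rw [heq, hsupp_rhs]
      exact Finset.mem_image_of_mem _ hSm
    obtain ⟨I, hI, J, hJ, hIJ⟩ := exists_of_mem_support_mul hc2
    rw [hIJ, toLex_add, toLex_add]
    exact hadd _ _ _ _ (hTmax I hI) (hSmax J hJ)
  have : Tm + Sm = Sm + εj := toLex.injective (hanti _ _ hA hB)
  rw [add_comm Sm εj] at this
  exact add_right_cancel this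

lemma key_lemma {g h : TA k q} {j : Fin n} (hh : h ≠ 0)
    (heq : g * h = h * sg q (Finsupp.single j 1) 1) :
    ∃ γ : k, γ ≠ 0 ∧ g = sg q (Finsupp.single j 1) γ := by
  set εj : Fin n →₀ ℕ := Finsupp.single j 1 with hεj
  have heFh : eF h ≠ 0 := fun h0 => hh (eF.injective (by simp [h0]))
  have hS : (eF h).support.Nonempty := Finsupp.support_nonempty_iff.mpr heFh
  have hsupp_rhs : (eF (h * sg q εj 1)).support = (eF h).support.image (· + εj) :=
    support_mul_sg h εj one_ne_zero
  have hg0 : g ≠ 0 := by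
    intro h0
    have h1 : (eF (g * h)).support = ∅ := by rw [h0, zero_mul]; simp
    rw [heq, hsupp_rhs] at h1
    obtain ⟨J, hJ⟩ := hS
    exact absurd h1 (Finset.nonempty_iff_ne_empty.mp ⟨J + εj, Finset.mem_image_of_mem _ hJ⟩)
  have heFg : eF g ≠ 0 := fun h0 => hg0 (eF.injective (by simp [h0]))
  have hT : (eF g).support.Nonempty := Finsupp.support_nonempty_iff.mpr heFg
  obtain ⟨Tmax, hTmaxmem, hTmax⟩ := Finset.exists_max_image (eF g).support toLex hT
  obtain ⟨Smax, hSmaxmem, hSmax⟩ := Finset.exists_max_image (eF h).support toLex hS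
  obtain ⟨Tmin, hTminmem, hTmin⟩ := Finset.exists_min_image (eF g).support toLex hT
  obtain ⟨Smin, hSminmem, hSmin⟩ := Finset.exists_min_image (eF h).support toLex hS
  have hmax : Tmax = εj :=
    extreme_aux heq hsupp_rhs (· ≤ ·) le_refl (fun _ _ => le_antisymm)
      (fun _ _ _ _ => add_le_add)
      (fun a b c d h1 h2 h3 => ne_of_lt (add_lt_add_of_lt_of_le (lt_of_le_of_ne h1 h2) h3))
      Tmax hTmaxmem Smax hSmaxmem hTmax hSmax
  have hmin : Tmin = εj :=
    extreme_aux heq hsupp_rhs (fun a b => b ≤ a) le_refl (fun _ _ h1 h2 => le_antisymm h2 h1)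
      (fun _ _ _ _ h1 h2 => add_le_add h1 h2)
      (fun a b c d h1 h2 h3 => (ne_of_lt (add_lt_add_of_lt_of_le
        (lt_of_le_of_ne h1 (Ne.symm h2)) h3)).symm)
      Tmin hTminmem Smin hSminmem hTmin hSmin
  have hsub : (eF g).support ⊆ {εj} := by
    intro I hI
    rw [Finset.mem_singleton]
    refine toLex.injective (le_antisymm ?_ ?_)
    · rw [← hmax]; exact hTmax I hI
    · rw [← hmin]; exact hTmin I hI
  refine ⟨eF g εj, ?_, ?_⟩
  · rw [← Finsupp.mem_support_iff]
    obtain ⟨I, hI⟩ := hT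
    have := hsub hI
    rw [Finset.mem_singleton] at this
    rwa [← this]
  · apply eF.injective
    rw [eF_sg]
    exact Finsupp.support_subset_singleton.mp hsub

end SkewNormal

/-- The skew-commutation relations defining the skew polynomial ring. -/
def skewRel (k : Type*) [Field k] {n : ℕ} (q : Fin n → Fin n → kˣ) :
    FreeAlgebra k (Fin n) → FreeAlgebra k (Fin n) → Prop :=
  fun a b => ∃ i j : Fin n, a = FreeAlgebra.ι k i * FreeAlgebra.ι k j ∧
    b = (q i j : k) • (FreeAlgebra.ι k j * FreeAlgebra.ι k i)

/-- The skew polynomial ring `k_q[x₁,…,xₙ]`. -/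
abbrev SkewPoly (k : Type*) [Field k] {n : ℕ} (q : Fin n → Fin n → kˣ) : Type _ :=
  RingQuot (skewRel k q)

/-- The variables `x i` of the skew polynomial ring. -/
def skewVar (k : Type*) [Field k] {n : ℕ} (q : Fin n → Fin n → kˣ) (i : Fin n) :
    SkewPoly k q :=
  RingQuot.mkAlgHom k (skewRel k q) (FreeAlgebra.ι k i)

namespace SkewNormal

variable {k : Type*} [Field k] {n : ℕ} (q : Fin n → Fin n → kˣ)

lemma var_comm (i j : Fin n) : skewVar k q i * skewVar k q j
    = (q i j : k) • (skewVar k q j * skewVar k q i) := by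
  have := RingQuot.mkAlgHom_rel k (s := skewRel k q) (⟨i, j, rfl, rfl⟩ :
    skewRel k q (FreeAlgebra.ι k i * FreeAlgebra.ι k j)
      ((q i j : k) • (FreeAlgebra.ι k j * FreeAlgebra.ι k i)))
  simpa [map_mul, map_smul, skewVar] using this

lemma pow_var_comm (j i : Fin n) (m : ℕ) : skewVar k q j ^ m * skewVar k q i
    = ((q j i : k) ^ m) • (skewVar k q i * skewVar k q j ^ m) := by
  induction m with
  | zero => simp
  | succ m ih =>
    rw [pow_succ, mul_assoc, var_comm q j i, mul_smul_comm, ← mul_assoc, ih,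
      smul_mul_assoc, smul_smul, mul_assoc, ← pow_succ']

/-- ordered monomial from index `m` on -/
def Xfrom (m : ℕ) (I : Fin n →₀ ℕ) : SkewPoly k q :=
  if h : m < n then skewVar k q ⟨m, h⟩ ^ I ⟨m, h⟩ * Xfrom (m + 1) I else 1
termination_by n - m

lemma Xfrom_stop {m : ℕ} (h : ¬ m < n) (I : Fin n →₀ ℕ) : Xfrom q m I = 1 := by
  rw [Xfrom, dif_neg h]

lemma Xfrom_spec {m : ℕ} (h : m < n) (I : Fin n →₀ ℕ) :
    Xfrom q m I = skewVar k q ⟨m, h⟩ ^ I ⟨m, h⟩ * Xfrom q (m + 1) I := by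
  conv_lhs => rw [Xfrom]
  rw [dif_pos h]

lemma Xfrom_congr_aux : ∀ (d m : ℕ), n ≤ m + d → ∀ I I' : Fin n →₀ ℕ,
    (∀ j : Fin n, m ≤ (j : ℕ) → I j = I' j) → Xfrom q m I = Xfrom q m I'
  | 0, m, hd, I, I', hII => by
    rw [Xfrom_stop q (by omega), Xfrom_stop q (by omega)]
  | d + 1, m, hd, I, I', hII => by
    by_cases h : m < n
    · rw [Xfrom_spec q h, Xfrom_spec q h,
        Xfrom_congr_aux d (m + 1) (by omega) I I' (fun j hj => hII j (by omega)),
        hII ⟨m, h⟩ (by simp)]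
    · rw [Xfrom_stop q h, Xfrom_stop q h]

lemma Xfrom_zero : ∀ (d m : ℕ), n ≤ m + d → Xfrom q m (0 : Fin n →₀ ℕ) = 1
  | 0, m, hd => Xfrom_stop q (by omega) 0
  | d + 1, m, hd => by
    by_cases h : m < n
    · rw [Xfrom_spec q h, Xfrom_zero d (m + 1) (by omega)]
      simp
    · exact Xfrom_stop q h 0

/-- the scalar collected when commuting `x i` from the right through `Xfrom m I` -/
def Cc (m : ℕ) (i : Fin n) (I : Fin n →₀ ℕ) : kˣ :=
  ∏ j ∈ Finset.univ.filter (fun j : Fin n => m ≤ (j : ℕ)), q j i ^ I j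

lemma Cc_stop {m : ℕ} (h : ¬ m < n) (i : Fin n) (I : Fin n →₀ ℕ) : Cc q m i I = 1 := by
  refine Finset.prod_eq_one fun j hj => ?_
  rw [Finset.mem_filter] at hj
  exact absurd hj.2 (by omega)

lemma Cc_step {m : ℕ} (h : m < n) (i : Fin n) (I : Fin n →₀ ℕ) :
    Cc q m i I = q ⟨m, h⟩ i ^ I ⟨m, h⟩ * Cc q (m + 1) i I := by
  have hins : Finset.univ.filter (fun j : Fin n => m ≤ (j : ℕ))
      = insert ⟨m, h⟩ (Finset.univ.filter (fun j : Fin n => m + 1 ≤ (j : ℕ))) := by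
    ext j
    simp only [Finset.mem_filter, Finset.mem_insert, Finset.mem_univ, true_and, Fin.ext_iff]
    omega
  rw [Cc, hins, Finset.prod_insert (by simp)]
  rfl

lemma L1 : ∀ (d m : ℕ), n ≤ m + d → ∀ (i : Fin n), (i : ℕ) < m → ∀ I : Fin n →₀ ℕ,
    Xfrom q m I * skewVar k q i = (Cc q m i I : k) • (skewVar k q i * Xfrom q m I)
  | 0, m, hd, i, hi, I => by
    rw [Xfrom_stop q (by omega), Cc_stop q (by omega)]
    simp
  | d + 1, m, hd, i, hi, I => by
    by_cases h : m < n
    · rw [Xfrom_spec q h, mul_assoc, L1 d (m + 1) (by omega) i (by omega) I,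
        Cc_step q h, mul_smul_comm, ← mul_assoc, pow_var_comm, smul_mul_assoc, smul_smul]
      rw [mul_assoc]
      congr 1
      push_cast
      ring
    · rw [Xfrom_stop q h, Cc_stop q h]
      simp

/-- the scalar for merging `x i` into an ordered monomial -/
def qE (i : Fin n) (I : Fin n →₀ ℕ) : kˣ :=
  ∏ j ∈ Finset.univ.filter (fun j : Fin n => (i : ℕ) < (j : ℕ)), q j i ^ I j

lemma qE_eq_Cc (i : Fin n) (I : Fin n →₀ ℕ) : qE q i I = Cc q ((i : ℕ) + 1) i I := by
  rfl

lemma qc_single_right (I : Fin n →₀ ℕ) (i : Fin n) :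
    qc q I (Finsupp.single i 1) = qE q i I := by
  unfold qc qE
  rw [Finset.prod_filter]
  refine Finset.prod_congr rfl fun i' _ => ?_
  rw [Finset.prod_eq_single i]
  · by_cases h : i < i' <;> simp [h]
  · intro j _ hj
    rw [Finsupp.single_apply, if_neg (Ne.symm hj)]
    by_cases h : j < i' <;> simp [h]
  · simp

lemma L2 : ∀ (d m : ℕ), n ≤ m + d → ∀ (i : Fin n), m ≤ (i : ℕ) → ∀ I : Fin n →₀ ℕ,
    Xfrom q m I * skewVar k q i = (qE q i I : k) • Xfrom q m (I + Finsupp.single i 1)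
  | 0, m, hd, i, hi, I => absurd (i.isLt) (by omega)
  | d + 1, m, hd, i, hi, I => by
    have h : m < n := by have := i.isLt; omega
    rcases eq_or_lt_of_le hi with heq | hlt
    · -- m = i : merge here
      have hfin : (⟨m, h⟩ : Fin n) = i := Fin.ext heq
      subst hfin
      rw [Xfrom_spec q h, mul_assoc, L1 q d (m + 1) (by omega) ⟨m, h⟩ (by omega) I,
        mul_smul_comm, ← mul_assoc, ← pow_succ,
        Xfrom_spec q h (I + Finsupp.single (⟨m, h⟩ : Fin n) 1), qE_eq_Cc]
      have h1 : (I + Finsupp.single (⟨m, h⟩ : Fin n) 1 : Fin n →₀ ℕ) ⟨m, h⟩ = I ⟨m, h⟩ + 1 := by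
        simp [Finsupp.add_apply]
      have h2 : Xfrom q (m + 1) (I + Finsupp.single (⟨m, h⟩ : Fin n) 1) = Xfrom q (m + 1) I := by
        refine Xfrom_congr_aux q (n) (m + 1) (by omega) _ _ fun j hj => ?_
        rw [Finsupp.add_apply, Finsupp.single_apply, if_neg, add_zero]
        intro hji
        rw [← hji] at hj
        exact absurd hj (by simp)
      rw [h1, h2]
    · -- m < i : keep walking
      rw [Xfrom_spec q h, mul_assoc, L2 d (m + 1) (by omega) i (by omega) I,
        mul_smul_comm, Xfrom_spec q h (I + Finsupp.single i 1)]
      have h1 : (I + Finsupp.single i 1 : Fin n →₀ ℕ) ⟨m, h⟩ = I ⟨m, h⟩ := by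
        rw [Finsupp.add_apply, Finsupp.single_apply, if_neg, add_zero]
        intro hji
        rw [hji] at hlt
        exact absurd hlt (by simp)
      rw [h1]

/-- the ordered monomial `x^I` -/
def Xmon (I : Fin n →₀ ℕ) : SkewPoly k q := Xfrom q 0 I

lemma Xmon_zero : Xmon q (0 : Fin n →₀ ℕ) = 1 := Xfrom_zero q n 0 (by omega)

lemma Xmon_mul_var (I : Fin n →₀ ℕ) (i : Fin n) :
    Xmon q I * skewVar k q i = (qc q I (Finsupp.single i 1) : k) • Xmon q (I + Finsupp.single i 1) := by
  rw [Xmon, Xmon, L2 q n 0 (by omega) i (by omega) I, qc_single_right]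

end SkewNormal

namespace SkewNormal

variable {k : Type*} [Field k] {n : ℕ} (q : Fin n → Fin n → kˣ)

lemma sg_smul (c : k) (I : Fin n →₀ ℕ) (a : k) : c • sg q I a = sg q I (c * a) := by
  apply eF.injective
  rw [map_smul, eF_sg, eF_sg, Finsupp.smul_single']

/-- The PBW homomorphism to the twisted algebra. -/
def Fhom (hq1 : ∀ i : Fin n, q i i = 1) (hq2 : ∀ i j : Fin n, q i j = (q j i)⁻¹) :
    SkewPoly k q →ₐ[k] TA k q :=
  RingQuot.liftAlgHom k ⟨FreeAlgebra.lift k fun i => sg q (Finsupp.single i 1) 1, by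
    rintro x y ⟨i, j, rfl, rfl⟩
    rw [map_mul, map_smul, map_mul]
    simp only [FreeAlgebra.lift_ι_apply]
    rw [sg_mul_sg, sg_mul_sg, sg_smul]
    have hsc : (qc q (Finsupp.single i 1) (Finsupp.single j 1) : k)
        = (q i j : k) * (qc q (Finsupp.single j 1) (Finsupp.single i 1) : k) := by
      rw [qc_single_single, qc_single_single]
      rcases lt_trichotomy i j with h | h | h
      · rw [if_neg (by omega), if_pos h, hq2 i j]
        simp
      · subst h
        rw [if_neg (lt_irrefl i), hq1 i]
        simp
      · rw [if_pos h, if_neg (by omega)]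
        simp
    rw [add_comm (Finsupp.single i 1)]
    simp only [one_mul]
    rw [hsc]⟩

lemma Fhom_var (hq1 : ∀ i : Fin n, q i i = 1) (hq2 : ∀ i j : Fin n, q i j = (q j i)⁻¹)
    (i : Fin n) : Fhom q hq1 hq2 (skewVar k q i) = sg q (Finsupp.single i 1) 1 := by
  unfold skewVar Fhom
  rw [RingQuot.liftAlgHom_mkAlgHom_apply, FreeAlgebra.lift_ι_apply]

/-- The linear section sending basis elements to ordered monomials. -/
def Bmap : TA k q →ₗ[k] SkewPoly k q :=
  (Finsupp.lsum k fun I => LinearMap.toSpanSingleton k (SkewPoly k q) (Xmon q I)) ∘ₗ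
    eF.toLinearMap

lemma Bmap_sg (I : Fin n →₀ ℕ) (a : k) : Bmap q (sg q I a) = a • Xmon q I := by
  show (Finsupp.lsum k fun I => LinearMap.toSpanSingleton k (SkewPoly k q) (Xmon q I))
    (Finsupp.single I a) = a • Xmon q I
  rw [Finsupp.lsum_single, LinearMap.toSpanSingleton_apply]

lemma Bmap_mul (hq1 : ∀ i : Fin n, q i i = 1) (hq2 : ∀ i j : Fin n, q i j = (q j i)⁻¹)
    (y : SkewPoly k q) :
    ∀ v : TA k q, Bmap q (v * Fhom q hq1 hq2 y) = Bmap q v * y := by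
  obtain ⟨x, rfl⟩ := RingQuot.mkAlgHom_surjective k (skewRel k q) y
  induction x using FreeAlgebra.induction with
  | grade0 r =>
    intro v
    rw [AlgHom.commutes, AlgHom.commutes, ← Algebra.commutes r, ← Algebra.smul_def, map_smul,
      ← Algebra.commutes r, ← Algebra.smul_def]
  | grade1 i =>
    intro v
    induction v using ta_induction with
    | h0 => simp
    | hadd f g hf hg => rw [add_mul, map_add, hf, hg, map_add, add_mul]
    | hs I a =>
      show Bmap q (sg q I a * Fhom q hq1 hq2 (skewVar k q i))
          = Bmap q (sg q I a) * skewVar k q i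
      rw [Fhom_var, sg_mul_sg, Bmap_sg, Bmap_sg, smul_mul_assoc, Xmon_mul_var, smul_smul,
        mul_one]
  | mul x y ihx ihy =>
    intro v
    rw [map_mul (RingQuot.mkAlgHom k (skewRel k q)), map_mul (Fhom q hq1 hq2),
      ← mul_assoc, ← mul_assoc, ihy, ihx]
  | add x y ihx ihy =>
    intro v
    rw [map_add (RingQuot.mkAlgHom k (skewRel k q)), map_add (Fhom q hq1 hq2),
      mul_add, map_add (Bmap q), ihx, ihy, mul_add]

lemma Fhom_injective (hq1 : ∀ i : Fin n, q i i = 1)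
    (hq2 : ∀ i j : Fin n, q i j = (q j i)⁻¹) : Function.Injective (Fhom q hq1 hq2) := by
  have hleft : ∀ y : SkewPoly k q, Bmap q (Fhom q hq1 hq2 y) = y := by
    intro y
    have := Bmap_mul q hq1 hq2 y 1
    rw [one_mul, show (1 : TA k q) = sg q 0 1 from rfl, Bmap_sg, Xmon_zero] at this
    simpa using this
  intro a b hab
  rw [← hleft a, ← hleft b, hab]

end SkewNormal

namespace SkewNormal

variable {k : Type*} [Field k] {n : ℕ} (q : Fin n → Fin n → kˣ)

lemma skew_hom_ext {A : Type*} [Semiring A] [Algebra k A] {F G : SkewPoly k q →ₐ[k] A}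
    (h : ∀ i, F (skewVar k q i) = G (skewVar k q i)) : F = G := by
  apply RingQuot.ringQuot_ext'
  apply FreeAlgebra.hom_ext
  funext i
  simpa [skewVar, Function.comp, AlgHom.comp_apply] using h i

/-- rescaling the variables -/
def scaleHom (c : Fin n → kˣ) : SkewPoly k q →ₐ[k] SkewPoly k q :=
  RingQuot.liftAlgHom k ⟨FreeAlgebra.lift k fun i => (c i : k) • skewVar k q i, by
    rintro x y ⟨i, j, rfl, rfl⟩
    rw [map_mul, map_smul, map_mul]
    simp only [FreeAlgebra.lift_ι_apply]
    simp only [smul_mul_assoc, mul_smul_comm, smul_smul]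
    rw [var_comm q i j, smul_smul]
    congr 1
    ring⟩

lemma scaleHom_var (c : Fin n → kˣ) (i : Fin n) :
    scaleHom q c (skewVar k q i) = (c i : k) • skewVar k q i := by
  unfold skewVar scaleHom
  rw [RingQuot.liftAlgHom_mkAlgHom_apply, FreeAlgebra.lift_ι_apply]
  rfl

/-- rescaling the variables, as an algebra automorphism -/
def scaleEquiv (c : Fin n → kˣ) : SkewPoly k q ≃ₐ[k] SkewPoly k q :=
  AlgEquiv.ofAlgHom (scaleHom q c) (scaleHom q fun i => (c i)⁻¹)
    (skew_hom_ext q fun i => by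
      rw [AlgHom.comp_apply, scaleHom_var, map_smul, scaleHom_var, smul_smul, AlgHom.id_apply]
      simp)
    (skew_hom_ext q fun i => by
      rw [AlgHom.comp_apply, scaleHom_var, map_smul, scaleHom_var, smul_smul, AlgHom.id_apply]
      simp)

lemma scaleEquiv_apply (c : Fin n → kˣ) (x : SkewPoly k q) :
    scaleEquiv q c x = scaleHom q c x := rfl

end SkewNormal

/-- The span of the words of length `d` in the variables: the homogeneous component of
internal degree `d` of the skew polynomial ring (deg xᵢ = 1). -/
def wordSpan (k : Type*) [Field k] {n : ℕ} (q : Fin n → Fin n → kˣ) (d : ℕ) :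
    Submodule k (SkewPoly k q) :=
  Submodule.span k
    {m : SkewPoly k q | ∃ w : List (Fin n), w.length = d ∧ m = (w.map (skewVar k q)).prod}

open SkewNormal in
/-- A homogeneous element f of the skew polynomial ring Q = k_q[x₁,…,xₙ]
(standard grading, deg xᵢ = 1) is normal (i.e. admits a normalizing algebra automorphism σ
with f·g = σ(g)·f for all g) if and only if there exist scalars β₁,…,βₙ ∈ kˣ with
f·xⱼ = βⱼ·xⱼ·f for all j. -/
theorem skewPoly_homogeneous_normal_iff {k : Type*} [Field k] {n : ℕ}
    (q : Fin n → Fin n → kˣ)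
    (hq1 : ∀ i : Fin n, q i i = 1)
    (hq2 : ∀ i j : Fin n, q i j = (q j i)⁻¹)
    (d : ℕ) (f : SkewPoly k q) (hf : f ∈ wordSpan k q d) :
    (∃ σ : SkewPoly k q ≃ₐ[k] SkewPoly k q, ∀ g : SkewPoly k q, f * g = σ g * f) ↔
    (∃ β : Fin n → kˣ, ∀ j : Fin n,
      f * skewVar k q j = (β j : k) • (skewVar k q j * f)) := by
  constructor
  · rintro ⟨σ, hσ⟩
    by_cases hf0 : f = 0
    · exact ⟨fun _ => 1, fun j => by simp [hf0]⟩
    · have hβ : ∀ j : Fin n, ∃ γ : k, γ ≠ 0 ∧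
          f * skewVar k q j = γ • (skewVar k q j * f) := by
        intro j
        have heq0 : σ (skewVar k q j) * f = f * skewVar k q j := (hσ _).symm
        have hFf : Fhom q hq1 hq2 f ≠ 0 := fun h0 =>
          hf0 (Fhom_injective q hq1 hq2 (by rw [h0, map_zero]))
        have heq : Fhom q hq1 hq2 (σ (skewVar k q j)) * Fhom q hq1 hq2 f
            = Fhom q hq1 hq2 f * sg q (Finsupp.single j 1) 1 := by
          rw [← map_mul, heq0, map_mul, Fhom_var]
        obtain ⟨γ, hγ0, hγ⟩ := key_lemma hFf heq
        refine ⟨γ, hγ0, ?_⟩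
        have hσx : σ (skewVar k q j) = γ • skewVar k q j := by
          apply Fhom_injective q hq1 hq2
          rw [map_smul, Fhom_var, hγ, sg_smul, mul_one]
        rw [hσ (skewVar k q j), hσx, smul_mul_assoc]
      choose γ hγ0 hγ using hβ
      exact ⟨fun j => Units.mk0 (γ j) (hγ0 j), fun j => by rw [hγ j]; rfl⟩
  · rintro ⟨β, hβ⟩
    refine ⟨scaleEquiv q β, ?_⟩
    intro g
    obtain ⟨x, rfl⟩ := RingQuot.mkAlgHom_surjective k (skewRel k q) g
    induction x using FreeAlgebra.induction with
    | grade0 r =>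
      rw [AlgHom.commutes, AlgEquiv.commutes, ← Algebra.commutes r]
    | grade1 i =>
      show f * skewVar k q i = scaleEquiv q β (skewVar k q i) * f
      rw [scaleEquiv_apply, scaleHom_var, hβ i, smul_mul_assoc]
    | mul x y ihx ihy =>
      rw [map_mul (RingQuot.mkAlgHom k (skewRel k q)), map_mul (scaleEquiv q β),
        ← mul_assoc, ihx, mul_assoc, ihy, ← mul_assoc]
    | add x y ihx ihy =>
      rw [map_add (RingQuot.mkAlgHom k (skewRel k q)), map_add (scaleEquiv q β),
        mul_add, add_mul, ihx, ihy]
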